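/- arXiv:1210.6918 — 6 statements merged into one kernel-verified Lean document; each statement's English description precedes it below -/
import Mathlib

section
/- Let G = (V,E) be a finite simple graph, let S be the set of all simplicial vertices of G, and let A = {a_1,...,a_k} be a maximal independent set of the subgraph of G induced by S. Let w : V → ℝ be any weight function such that w(v) = w(N(v) ∩ A) for every v ∈ V \ A (where w of the empty set is 0). Then G is w-well-covered; moreover, every maximal independent set X of G satisfies w(X) = w(A). -/
namespace WC

variable {V : Type*}

/-- A set of vertices is independent if its elements are pairwise nonadjacent. -/
def IsIndep (G : SimpleGraph V) (S : Set V) : Prop :=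
  S.Pairwise fun a b => ¬ G.Adj a b

/-- A maximal independent set: independent and not properly contained in another
independent set. -/
def IsMaxIndep (G : SimpleGraph V) (S : Set V) : Prop :=
  IsIndep G S ∧ ∀ T : Set V, IsIndep G T → S ⊆ T → T = S

/-- A maximal independent set of the subgraph of `G` induced by `A`
(equivalently, a subset of `A`, independent in `G`, maximal among such). -/
def IsMaxIndepOn (G : SimpleGraph V) (A S : Set V) : Prop :=
  S ⊆ A ∧ IsIndep G S ∧ ∀ T : Set V, T ⊆ A → IsIndep G T → S ⊆ T → T = S

/-- The weight of a set of vertices: `w(S) = Σ_{s ∈ S} w(s)`. -/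
noncomputable def wsum (w : V → ℝ) (S : Set V) : ℝ := ∑ᶠ x ∈ S, w x

/-- `G` is `w`-well-covered if all maximal independent sets have the same weight. -/
def WWC (G : SimpleGraph V) (w : V → ℝ) : Prop :=
  ∀ S T : Set V, IsMaxIndep G S → IsMaxIndep G T → wsum w S = wsum w T

/-- `G` is well-covered if all maximal independent sets have the same cardinality. -/
def WellCovered (G : SimpleGraph V) : Prop :=
  ∀ S T : Set V, IsMaxIndep G S → IsMaxIndep G T → S.ncard = T.ncard

/-- `N(S)`, the set of vertices at distance exactly 1 from `S`. -/
def nbhd (G : SimpleGraph V) (S : Set V) : Set V :=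
  {x | x ∉ S ∧ ∃ s ∈ S, G.Adj x s}

/-- `N[S]`, the set of vertices at distance at most 1 from `S`. -/
def cnbhd (G : SimpleGraph V) (S : Set V) : Set V :=
  S ∪ {x | ∃ s ∈ S, G.Adj x s}

/-- `N₂(S)`, the set of vertices at distance exactly 2 from `S`. -/
def n2 (G : SimpleGraph V) (S : Set V) : Set V :=
  {x | x ∉ cnbhd G S ∧ ∃ y ∈ nbhd G S, G.Adj x y}

/-- `S` dominates `T` if `T ⊆ N[S]`. -/
def Dominates (G : SimpleGraph V) (S T : Set V) : Prop := T ⊆ cnbhd G S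

/-- `D(v) = N(v) \ N(N₂(v))`. -/
def dSet (G : SimpleGraph V) (v : V) : Set V :=
  G.neighborSet v \ nbhd G (n2 G {v})

/-- `L(G)`: vertices of degree 1, or of degree 2 lying on a triangle. -/
def lSet (G : SimpleGraph V) : Set V :=
  {v | (G.neighborSet v).ncard = 1 ∨
    ((G.neighborSet v).ncard = 2 ∧ ∃ a b, G.Adj v a ∧ G.Adj v b ∧ G.Adj a b)}

/-- `G` contains a cycle of length `k` as a (not necessarily induced) subgraph. -/
def HasCycleLen (G : SimpleGraph V) (k : ℕ) : Prop :=
  ∃ (u : V) (p : G.Walk u u), p.IsCycle ∧ p.length = k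

/-- A vertex is simplicial if its closed neighborhood induces a complete subgraph. -/
def Simplicial (G : SimpleGraph V) (v : V) : Prop :=
  ∀ a ∈ G.neighborSet v, ∀ b ∈ G.neighborSet v, a ≠ b → G.Adj a b

/-- `B` is an induced complete bipartite subgraph of `G` on (nonempty, disjoint)
parts `BX` and `BY`. -/
def IsCompleteBipartiteOn (G : SimpleGraph V) (BX BY : Set V) : Prop :=
  BX.Nonempty ∧ BY.Nonempty ∧ Disjoint BX BY ∧ IsIndep G BX ∧ IsIndep G BY ∧
    ∀ x ∈ BX, ∀ y ∈ BY, G.Adj x y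

/-- `B` (on parts `BX`, `BY`) is a generating subgraph of `G`: there is an
independent set `S` (a witness) such that `S ∪ BX` and `S ∪ BY` are both
maximal independent sets of `G`. -/
def IsGenerating (G : SimpleGraph V) (BX BY : Set V) : Prop :=
  ∃ S : Set V, IsIndep G S ∧ IsMaxIndep G (S ∪ BX) ∧ IsMaxIndep G (S ∪ BY)

/-- The edge `xy` is relating: there is an independent set `S` such that
`S ∪ {x}` and `S ∪ {y}` are both maximal independent sets of `G`. -/
def IsRelating (G : SimpleGraph V) (x y : V) : Prop :=
  G.Adj x y ∧ ∃ S : Set V, IsIndep G S ∧ IsMaxIndep G (S ∪ {x}) ∧ IsMaxIndep G (S ∪ {y})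

end WC

open WC

/-- weights determined by a maximal independent set of the
simplicial vertices yield a `w`-well-covered graph. -/
theorem stmt_1 {V : Type*} [Fintype V] (G : SimpleGraph V) (w : V → ℝ) (A : Set V)
    (hA : IsMaxIndepOn G {v : V | Simplicial G v} A)
    (hw : ∀ v : V, v ∉ A → w v = wsum w (G.neighborSet v ∩ A)) :
    WWC G w ∧ ∀ X : Set V, IsMaxIndep G X → wsum w X = wsum w A := by
  have hAind : IsIndep G A := hA.2.1
  have hAsimp : ∀ a ∈ A, Simplicial G a := fun a ha => hA.1 ha
  have key : ∀ X : Set V, IsMaxIndep G X → wsum w X = wsum w A := by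
    intro X hX
    obtain ⟨hXind, hXmax⟩ := hX
    have hdom : ∀ a : V, a ∉ X → ∃ x ∈ X, G.Adj a x := by
      intro a haX
      by_contra h
      push_neg at h
      have hind : IsIndep G (insert a X) := by
        intro u hu v hv huv
        rcases hu with rfl | hu <;> rcases hv with rfl | hv
        · exact absurd rfl huv
        · exact fun hadj => h v hv hadj
        · exact fun hadj => h u hu hadj.symm
        · exact hXind hu hv huv
      have := hXmax _ hind (Set.subset_insert a X)
      exact haX (this ▸ Set.mem_insert a X)
    set t : V → Set V := fun x => A ∩ insert x (G.neighborSet x) with ht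
    have hcover : (⋃ x ∈ X, t x) = A := by
      apply Set.Subset.antisymm
      · intro a ha
        simp only [Set.mem_iUnion] at ha
        obtain ⟨x, _, hax⟩ := ha
        exact hax.1
      · intro a ha
        by_cases haX : a ∈ X
        · exact Set.mem_biUnion haX ⟨ha, Set.mem_insert a _⟩
        · obtain ⟨x, hxX, hadj⟩ := hdom a haX
          exact Set.mem_biUnion hxX ⟨ha, Set.mem_insert_of_mem _ hadj.symm⟩
    have hdisj : X.Pairwise (Function.onFun Disjoint t) := by
      intro x hx y hy hxy
      rw [Function.onFun, Set.disjoint_left]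
      rintro a ⟨haA, hax⟩ ⟨_, hay⟩
      rcases hax with rfl | hax <;> rcases hay with rfl | hay
      · exact hxy rfl
      · exact hXind hx hy hxy ((G.mem_neighborSet _ _).mp hay).symm
      · exact hXind hx hy hxy ((G.mem_neighborSet _ _).mp hax)
      · have hax' : x ∈ G.neighborSet a := (G.mem_neighborSet _ _).mpr ((G.mem_neighborSet _ _).mp hax).symm
        have hay' : y ∈ G.neighborSet a := (G.mem_neighborSet _ _).mpr ((G.mem_neighborSet _ _).mp hay).symm
        exact hXind hx hy hxy (hAsimp a haA x hax' y hay' hxy)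
    have hval : ∀ x ∈ X, wsum w (t x) = w x := by
      intro x hx
      by_cases hxA : x ∈ A
      · have : t x = {x} := by
          apply Set.Subset.antisymm
          · rintro a ⟨haA, ha⟩
            rcases ha with rfl | ha
            · rfl
            · have hadj : G.Adj a x := ((G.mem_neighborSet _ _).mp ha).symm
              exact absurd hadj (hAind haA hxA hadj.ne)
          · intro a ha
            rw [Set.mem_singleton_iff] at ha
            subst ha
            exact ⟨hxA, Set.mem_insert a _⟩
        rw [this]
        exact finsum_mem_singleton
      · have : t x = G.neighborSet x ∩ A := by
          ext a
          constructor
          · rintro ⟨haA, ha⟩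
            rcases ha with rfl | ha
            · exact absurd haA hxA
            · exact ⟨ha, haA⟩
          · rintro ⟨ha, haA⟩
            exact ⟨haA, Set.mem_insert_of_mem _ ha⟩
        rw [this]
        exact (hw x hxA).symm
    have : wsum w X = ∑ᶠ x ∈ X, wsum w (t x) := finsum_mem_congr rfl fun x hx => (hval x hx).symm
    rw [this]
    simp only [wsum]
    rw [← finsum_mem_biUnion hdisj X.toFinite (fun i _ => (t i).toFinite), hcover]
  exact ⟨fun S T hS hT => (key S hS).trans (key T hT).symm, key⟩
end

section
/- Let G = (V,E) be a finite simple graph containing no cycle of length 5 (as a subgraph, not necessarily induced), and let v ∈ V. Then every maximal independent set of the subgraph of G induced by N_2(v) dominates N(v) ∩ N(N_2(v)). -/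
open WC

/-- in a graph with no `C₅`, every maximal independent set of the
subgraph induced by `N₂(v)` dominates `N(v) ∩ N(N₂(v))`. -/
theorem stmt_4 {V : Type*} [Fintype V] (G : SimpleGraph V)
    (h5 : ¬ HasCycleLen G 5) (v : V) (T : Set V)
    (hT : IsMaxIndepOn G (n2 G {v}) T) :
    Dominates G T (G.neighborSet v ∩ nbhd G (n2 G {v})) := by
  classical
  obtain ⟨hTA, hTI, hTmax⟩ := hT
  intro u hu
  obtain ⟨huv0, hun2, x, hxn2, hux⟩ := hu
  have huv : G.Adj u v := (SimpleGraph.mem_neighborSet ..).mp huv0 |>.symm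
  -- u is adjacent to v, x ∈ N₂(v), u adjacent to x
  by_cases hadj : ∃ t ∈ T, G.Adj u t
  · obtain ⟨t, htT, hut⟩ := hadj
    exact Or.inr ⟨t, htT, hut⟩
  push_neg at hadj
  exfalso
  -- x ∉ T
  have hxT : x ∉ T := fun hx => hadj x hx hux
  -- x has a neighbor t ∈ T (by maximality)
  have hxt : ∃ t ∈ T, G.Adj x t := by
    by_contra hno
    push_neg at hno
    have key := hTmax (insert x T) ?_ ?_ (Set.subset_insert x T)
    · exact hxT (key ▸ Set.mem_insert x T)
    · exact Set.insert_subset hxn2 hTA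
    · intro a ha b hb hne
      rcases ha with rfl | haT
      · rcases hb with rfl | hbT
        · exact absurd rfl hne
        · exact hno b hbT
      · rcases hb with rfl | hbT
        · intro h; exact hno a haT h.symm
        · exact hTI haT hbT hne
  obtain ⟨t, htT, hxtadj⟩ := hxt
  -- t ∈ N₂(v), so t has a neighbor y ∈ N(v)
  have htn2 : t ∈ n2 G {v} := hTA htT
  obtain ⟨htc, y, hynb, hty⟩ := htn2
  obtain ⟨hyv', w, hw, hyw⟩ := hynb
  rw [Set.mem_singleton_iff] at hw
  -- y adjacent to v
  have hyv : G.Adj y v := hw ▸ hyw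
  -- basic facts for distinctness
  have hxc : x ∉ cnbhd G {v} := hxn2.1
  have hvx : v ≠ x := fun h => hxc (Or.inl (h ▸ rfl))
  have hux_ne : u ≠ x := fun h => hxc (Or.inr ⟨v, rfl, h ▸ huv⟩)
  have hut_ne : u ≠ t := fun h => htc (Or.inr ⟨v, rfl, h ▸ huv⟩)
  have huy : u ≠ y := fun h => hadj t htT (by subst h; exact hty.symm)
  have hvt : v ≠ t := fun h => htc (Or.inl (h ▸ rfl))
  have hvy : v ≠ y := fun h => G.irrefl (h ▸ hyv)
  have hvu : v ≠ u := G.ne_of_adj huv.symm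
  have hxt_ne : x ≠ t := fun h => hxT (h ▸ htT)
  have hxy : x ≠ y := fun h => hxc (Or.inr ⟨v, rfl, h ▸ hyv⟩)
  have hty_ne : t ≠ y := fun h => htc (Or.inr ⟨v, rfl, h ▸ hyv⟩)
  -- build the 5-cycle v u x t y v
  apply h5
  refine ⟨v, SimpleGraph.Walk.cons huv.symm
    (SimpleGraph.Walk.cons hux (SimpleGraph.Walk.cons hxtadj
    (SimpleGraph.Walk.cons hty (SimpleGraph.Walk.cons hyv SimpleGraph.Walk.nil)))), ?_, rfl⟩
  constructor
  · constructor
    · constructor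
      simp only [SimpleGraph.Walk.edges_cons, SimpleGraph.Walk.edges_nil,
        List.nodup_cons, List.mem_cons, List.not_mem_nil, or_false, List.nodup_nil,
        and_true, Sym2.eq, Sym2.rel_iff', Prod.mk.injEq, Prod.swap_prod_mk]
      refine ⟨?_, ?_, ?_, ?_⟩ <;> push_neg <;>
        simp_all [eq_comm, G.ne_of_adj, Ne.symm]
    · simp
  · simp only [SimpleGraph.Walk.support_cons, SimpleGraph.Walk.support_nil,
      List.tail_cons, List.nodup_cons, List.mem_cons, List.not_mem_nil, or_false,
      List.nodup_nil, and_true]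
    push_neg
    exact ⟨⟨hux_ne, hut_ne, huy, hvu.symm⟩, ⟨hxt_ne, hxy, hvx.symm⟩, ⟨hty_ne, hvt.symm⟩, hvy.symm, trivial⟩
end

section
/- Let G = (V,E) be a finite simple graph containing no cycle of length 5 (as a subgraph, not necessarily induced), and let v ∈ V with D(v) = ∅. Then every maximal independent set of the subgraph of G induced by N_2(v) dominates N(v). -/
open WC

/-- in a graph with no `C₅`, if `D(v) = ∅` then every maximal
independent set of the subgraph induced by `N₂(v)` dominates `N(v)`. -/
theorem stmt_5 {V : Type*} [Fintype V] (G : SimpleGraph V)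
    (h5 : ¬ HasCycleLen G 5) (v : V) (hD : dSet G v = ∅) (T : Set V)
    (hT : IsMaxIndepOn G (n2 G {v}) T) :
    Dominates G T (G.neighborSet v) := by
  intro u hu
  have hvu : G.Adj v u := hu
  by_contra hnot
  have huT : u ∉ T := fun h => hnot (Or.inl h)
  have hnoadj : ∀ t ∈ T, ¬ G.Adj u t := by
    intro t ht hadj
    exact hnot (Or.inr ⟨t, ht, hadj⟩)
  -- u has a neighbor s in N₂(v)
  have hmem : u ∈ nbhd G (n2 G {v}) := by
    by_contra h
    have : u ∈ dSet G v := ⟨hu, h⟩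
    rw [hD] at this
    exact this
  obtain ⟨hun2, s, hs_n2, hus⟩ := hmem
  have hsT : s ∉ T := fun h => hnoadj s h hus
  obtain ⟨hTsub, hTind, hTmax⟩ := hT
  -- insert s T is not independent
  have hnotind : ¬ IsIndep G (insert s T) := by
    intro hind
    have := hTmax (insert s T) (by
      intro x hx
      rcases hx with rfl | hx
      · exact hs_n2
      · exact hTsub hx) hind (Set.subset_insert s T)
    exact hsT (this ▸ Set.mem_insert s T)
  -- so s has a neighbor t in T
  have hex : ∃ t ∈ T, G.Adj s t := by
    by_contra h
    push_neg at h
    apply hnotind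
    rw [IsIndep, Set.pairwise_insert]
    exact ⟨hTind, fun b hb _ => ⟨h b hb, fun hadj => h b hb hadj.symm⟩⟩
  obtain ⟨t, htT, hst⟩ := hex
  have ht_n2 : t ∈ n2 G {v} := hTsub htT
  obtain ⟨ht_cn, w, hw_nb, htw⟩ := ht_n2
  obtain ⟨-, w', hw', hwv'⟩ := hw_nb
  have hwv : G.Adj w v := by rwa [Set.mem_singleton_iff.mp hw'] at hwv'
  have hs_cn : s ∉ cnbhd G {v} := hs_n2.1
  -- distinctness
  have hvs : v ≠ s := fun h => hs_cn (Or.inl (Set.mem_singleton_iff.mpr h.symm))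
  have hvt : v ≠ t := fun h => ht_cn (Or.inl (Set.mem_singleton_iff.mpr h.symm))
  have hut : u ≠ t := by
    rintro rfl
    exact ht_cn (Or.inr ⟨v, rfl, hvu.symm⟩)
  have huw : u ≠ w := by
    rintro rfl
    exact hnoadj t htT htw.symm
  have hsw : s ≠ w := by
    rintro rfl
    exact hs_cn (Or.inr ⟨v, rfl, hwv⟩)
  have htw' : t ≠ w := by
    rintro rfl
    exact ht_cn (Or.inr ⟨v, rfl, hwv⟩)
  have hst' : s ≠ t := fun h => hsT (h ▸ htT)
  have hvu' : v ≠ u := hvu.ne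
  have hvw : v ≠ w := hwv.ne'
  have hus' : u ≠ s := hus.ne
  -- build the 5-cycle v-u-s-t-w-v
  apply h5
  refine ⟨v, .cons hvu (.cons hus (.cons hst (.cons htw (.cons hwv .nil)))), ?_, rfl⟩
  rw [SimpleGraph.Walk.isCycle_def, SimpleGraph.Walk.isTrail_def]
  refine ⟨?_, by simp, ?_⟩
  · simp only [SimpleGraph.Walk.edges_cons, SimpleGraph.Walk.edges_nil,
      List.nodup_cons, List.mem_cons, List.not_mem_nil, or_false, List.nodup_nil,
      and_true, Sym2.eq_iff]
    refine ⟨?_, ?_, ?_, ?_⟩ <;> push_neg <;>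
      simp_all [eq_comm, Ne, not_or]
  · simp only [SimpleGraph.Walk.support_cons, SimpleGraph.Walk.support_nil,
      List.tail_cons, List.nodup_cons, List.mem_cons, List.not_mem_nil, or_false,
      List.nodup_nil, and_true, List.mem_singleton]
    refine ⟨?_, ?_, ?_, ?_⟩ <;> push_neg <;>
      simp_all [eq_comm, Ne]
end

section
/- Let G = (V,E) be a finite simple graph containing no cycle of length 5 (as a subgraph, not necessarily induced), and let v ∈ V. Then the subgraph of G induced by D(v) contains no path with 4 vertices (i.e., no path of length 3) as a subgraph; consequently, every connected component of the subgraph induced by D(v) is either a triangle K_3 or a star (where K_1 and K_2 are regarded as stars). -/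
namespace WC

section Aux

open SimpleGraph

variable {W : Type*}

def NoP4 (H : SimpleGraph W) : Prop :=
  ∀ a b c d : W, a ≠ b → a ≠ c → a ≠ d → b ≠ c → b ≠ d → c ≠ d →
    H.Adj a b → H.Adj b c → H.Adj c d → False

lemma path_short {H : SimpleGraph W} (hP : NoP4 H) :
    ∀ {x y : W} (p : H.Walk x y), p.IsPath →
      x = y ∨ H.Adj x y ∨ ∃ m, H.Adj x m ∧ H.Adj m y := by
  intro x y p hp
  match p with
  | .nil => exact Or.inl rfl
  | .cons h .nil => exact Or.inr (Or.inl h)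
  | .cons h (.cons h' .nil) => exact Or.inr (Or.inr ⟨_, h, h'⟩)
  | .cons (v := b) h (.cons (v := c) h' (.cons (v := d) h'' q)) =>
    exfalso
    have hs := hp.support_nodup
    simp only [SimpleGraph.Walk.support_cons, List.nodup_cons, List.mem_cons] at hs
    have hd : d ∈ q.support := q.start_mem_support
    refine hP x b c d ?_ ?_ ?_ ?_ ?_ ?_ h h' h''
    · intro e; exact hs.1 (Or.inl e)
    · intro e; exact hs.1 (Or.inr (Or.inl e))
    · intro e; exact hs.1 (Or.inr (Or.inr (e ▸ hd)))
    · intro e; exact hs.2.1 (Or.inl e)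
    · intro e; exact hs.2.1 (Or.inr (e ▸ hd))
    · intro e; exact hs.2.2.1 (e ▸ hd)

lemma reach_short {H : SimpleGraph W} (hP : NoP4 H) {x y : W}
    (h : H.Reachable x y) : x = y ∨ H.Adj x y ∨ ∃ m, H.Adj x m ∧ H.Adj m y := by
  classical
  obtain ⟨p⟩ := h
  exact path_short hP p.toPath.1 p.toPath.2

lemma adj_mem_supp {H : SimpleGraph W} {C : H.ConnectedComponent} {a b : W}
    (ha : a ∈ C.supp) (h : H.Adj a b) : b ∈ C.supp := by
  rw [ConnectedComponent.mem_supp_iff] at *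
  rw [← ha]
  exact ConnectedComponent.eq.2 h.symm.reachable

lemma reach_of_mem {H : SimpleGraph W} {C : H.ConnectedComponent} {x y : W}
    (hx : x ∈ C.supp) (hy : y ∈ C.supp) : H.Reachable x y := by
  rw [ConnectedComponent.mem_supp_iff] at *
  exact ConnectedComponent.eq.1 (hx.trans hy.symm)

lemma comp_structure {H : SimpleGraph W} (hP : NoP4 H)
    (C : H.ConnectedComponent) :
    (∃ a b c : W, a ≠ b ∧ a ≠ c ∧ b ≠ c ∧ H.Adj a b ∧ H.Adj a c ∧ H.Adj b c ∧
      C.supp = {a, b, c}) ∨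
    (∃ c ∈ C.supp, (∀ x ∈ C.supp, x ≠ c → H.Adj c x) ∧
      ∀ x ∈ C.supp, ∀ y ∈ C.supp, H.Adj x y → x = c ∨ y = c) := by
  classical
  by_cases htri : ∃ a b c : W, a ∈ C.supp ∧ H.Adj a b ∧ H.Adj a c ∧ H.Adj b c
  · obtain ⟨a, b, c, ha, hab, hac, hbc⟩ := htri
    left
    have hb : b ∈ C.supp := adj_mem_supp ha hab
    have hc : c ∈ C.supp := adj_mem_supp ha hac
    refine ⟨a, b, c, hab.ne, hac.ne, hbc.ne, hab, hac, hbc, ?_⟩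
    ext x
    simp only [Set.mem_insert_iff, Set.mem_singleton_iff]
    constructor
    · intro hx
      by_contra hxn
      push_neg at hxn
      obtain ⟨hxa, hxb, hxc⟩ := hxn
      rcases reach_short hP (reach_of_mem hx ha) with e | hxA | ⟨m, hxm, hma⟩
      · exact hxa e
      · exact hP x a b c hxa hxb hxc hab.ne hac.ne hbc.ne hxA hab hbc
      · by_cases hmb : m = b
        · subst hmb
          exact hP x m a c hxm.ne hxa hxc
            (fun e => hxm.ne' (by rw [e] at hma; exact absurd hma (H.irrefl)))
            hbc.ne hac.ne hxm hma hac
        · by_cases hmc : m = c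
          · subst hmc
            exact hP x m a b hxm.ne hxa hxb hma.ne hbc.ne.symm hab.ne hxm hma hab
          · exact hP x m a b hxm.ne hxa hxb hma.ne hmb hab.ne hxm hma hab
    · rintro (e | e | e) <;> subst e <;> assumption
  · right
    push_neg at htri
    have NT : ∀ a b c : W, a ∈ C.supp → H.Adj a b → H.Adj a c → H.Adj b c → False :=
      fun a b c ha h1 h2 h3 => htri a b c ha h1 h2 h3
    by_cases hedge : ∃ p q : W, p ∈ C.supp ∧ H.Adj p q
    · obtain ⟨p, q, hpC, hpq⟩ := hedge
      have hqC : q ∈ C.supp := adj_mem_supp hpC hpq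
      have K : ∀ x ∈ C.supp, x ≠ p → x ≠ q → H.Adj x p ∨ H.Adj x q := by
        intro x hx hxp hxq
        rcases reach_short hP (reach_of_mem hx hpC) with e | hxA | ⟨m, hxm, hmp⟩
        · exact absurd e hxp
        · exact Or.inl hxA
        · by_cases hmq : m = q
          · exact Or.inr (hmq ▸ hxm)
          · exact absurd (hP x m p q hxm.ne hxp hxq hmp.ne hmq hpq.ne hxm hmp hpq) id
      by_cases hq : ∃ x ∈ C.supp, x ≠ p ∧ x ≠ q ∧ H.Adj x q
      · obtain ⟨x₀, hx₀C, hx₀p, hx₀q, hx₀adj⟩ := hq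
        have ctr : ∀ y ∈ C.supp, y ≠ q → H.Adj q y := by
          intro y hy hyq
          by_cases hyp : y = p
          · exact hyp ▸ hpq.symm
          · rcases K y hy hyp hyq with hA | hA
            · by_cases hyx : y = x₀
              · exact (hyx ▸ hx₀adj).symm
              · exact absurd (hP y p q x₀ hyp hyq hyx hpq.ne hx₀p.symm hx₀q.symm
                  hA hpq hx₀adj.symm) id
            · exact hA.symm
        refine ⟨q, hqC, ctr, ?_⟩
        intro x hx y hy hxy
        by_contra hn
        push_neg at hn
        exact NT q x y hqC (ctr x hx hn.1) (ctr y hy hn.2) hxy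
      · push_neg at hq
        have ctr : ∀ y ∈ C.supp, y ≠ p → H.Adj p y := by
          intro y hy hyp
          by_cases hyq : y = q
          · exact hyq ▸ hpq
          · rcases K y hy hyp hyq with hA | hA
            · exact hA.symm
            · exact absurd hA (hq y hy hyp hyq)
        refine ⟨p, hpC, ctr, ?_⟩
        intro x hx y hy hxy
        by_contra hn
        push_neg at hn
        exact NT p x y hpC (ctr x hx hn.1) (ctr y hy hn.2) hxy
    · push_neg at hedge
      obtain ⟨w, hw⟩ := C.exists_rep
      have hwC : w ∈ C.supp := by rwa [ConnectedComponent.mem_supp_iff]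
      refine ⟨w, hwC, ?_, ?_⟩
      · intro x hx hxw
        rcases reach_short hP (reach_of_mem hx hwC) with e | hxA | ⟨m, hxm, hmw⟩
        · exact absurd e hxw
        · exact absurd hxA (hedge x w hx)
        · exact absurd hxm (hedge x m hx)
      · intro x hx y hy hxy
        exact absurd hxy (hedge x y hx)

end Aux


variable {V : Type*}

end WC

open WC

/-- in a graph with no `C₅`, the subgraph induced by `D(v)` contains
no path on 4 vertices; consequently every connected component of that induced
subgraph is a triangle `K₃` or a star (with `K₁`, `K₂` regarded as stars). -/
theorem stmt_6 {V : Type*} [Fintype V] (G : SimpleGraph V)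
    (h5 : ¬ HasCycleLen G 5) (v : V) :
    (¬ ∃ a b c d : V, a ∈ dSet G v ∧ b ∈ dSet G v ∧ c ∈ dSet G v ∧ d ∈ dSet G v ∧
      a ≠ b ∧ a ≠ c ∧ a ≠ d ∧ b ≠ c ∧ b ≠ d ∧ c ≠ d ∧
      G.Adj a b ∧ G.Adj b c ∧ G.Adj c d) ∧
    (∀ C : (G.induce (dSet G v)).ConnectedComponent,
      (∃ a b c : dSet G v, a ≠ b ∧ a ≠ c ∧ b ≠ c ∧
        G.Adj (a : V) (b : V) ∧ G.Adj (a : V) (c : V) ∧ G.Adj (b : V) (c : V) ∧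
        C.supp = {a, b, c}) ∨
      (∃ c ∈ C.supp, (∀ x ∈ C.supp, x ≠ c → G.Adj (c : V) (x : V)) ∧
        ∀ x ∈ C.supp, ∀ y ∈ C.supp, G.Adj (x : V) (y : V) → x = c ∨ y = c)) := by
  classical
  have part1 : ¬ ∃ a b c d : V, a ∈ dSet G v ∧ b ∈ dSet G v ∧ c ∈ dSet G v ∧ d ∈ dSet G v ∧
      a ≠ b ∧ a ≠ c ∧ a ≠ d ∧ b ≠ c ∧ b ≠ d ∧ c ≠ d ∧
      G.Adj a b ∧ G.Adj b c ∧ G.Adj c d := by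
    rintro ⟨a, b, c, d, ha, hb, hc, hd, hAB, hAC, hAD, hBC, hBD, hCD, hab, hbc, hcd⟩
    apply h5
    have hva : G.Adj v a := ha.1
    have hvb : G.Adj v b := hb.1
    have hvc : G.Adj v c := hc.1
    have hvd : G.Adj v d := hd.1
    refine ⟨v, .cons hva (.cons hab (.cons hbc (.cons hcd (.cons hvd.symm .nil)))), ?_, by simp⟩
    rw [SimpleGraph.Walk.isCycle_def]
    refine ⟨?_, by simp, ?_⟩
    · rw [SimpleGraph.Walk.isTrail_def]
      simp only [SimpleGraph.Walk.edges_cons, SimpleGraph.Walk.edges_nil, List.nodup_cons,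
        List.mem_cons, List.mem_singleton, List.not_mem_nil, List.nodup_nil, Sym2.eq,
        Sym2.rel_iff', Prod.mk.injEq, Prod.swap_prod_mk]
      have h1 := hva.ne
      have h2 := hvb.ne
      have h3 := hvc.ne
      have h4 := hvd.ne
      tauto
    · simp only [SimpleGraph.Walk.support_cons, SimpleGraph.Walk.support_nil, List.tail_cons,
        List.nodup_cons, List.mem_cons, List.mem_singleton, List.not_mem_nil, List.nodup_nil]
      have h1 := hva.ne
      have h2 := hvb.ne
      have h3 := hvc.ne
      have h4 := hvd.ne
      tauto
  have hP : NoP4 (G.induce (dSet G v)) := by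
    rintro ⟨a, ha⟩ ⟨b, hb⟩ ⟨c, hc⟩ ⟨d, hd⟩ nab nac nad nbc nbd ncd h1 h2 h3
    exact part1 ⟨a, b, c, d, ha, hb, hc, hd,
      fun e => nab (Subtype.ext e), fun e => nac (Subtype.ext e), fun e => nad (Subtype.ext e),
      fun e => nbc (Subtype.ext e), fun e => nbd (Subtype.ext e), fun e => ncd (Subtype.ext e),
      h1, h2, h3⟩
  refine ⟨part1, fun C => ?_⟩
  rcases comp_structure hP C with ⟨a, b, c, nab, nac, nbc, hab, hac, hbc, hsupp⟩ |
    ⟨c, hc, h1, h2⟩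
  · exact Or.inl ⟨a, b, c, nab, nac, nbc, hab, hac, hbc, hsupp⟩
  · exact Or.inr ⟨c, hc, h1, h2⟩
end

section
/- Let G = (V,E) be a finite simple graph containing no cycle of length 5 (as a subgraph, not necessarily induced), and let w : V → ℝ be a weight function such that G is w-well-covered. Then for every vertex v ∈ V \ L(G) with D(v) ≠ ∅, and for every maximal independent set M of the subgraph of G induced by D(v), w(v) = w(M). -/
open WC

private lemma mk_c5 {V : Type*} (G : SimpleGraph V) {v u1 y1 y2 u2 : V}
    (h1 : G.Adj v u1) (h2 : G.Adj u1 y1) (h3 : G.Adj y1 y2) (h4 : G.Adj y2 u2)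
    (h5 : G.Adj u2 v)
    (hvy1 : v ≠ y1) (hvy2 : v ≠ y2)
    (hu1y2 : u1 ≠ y2) (hu1u2 : u1 ≠ u2) (hy1u2 : y1 ≠ u2) :
    HasCycleLen G 5 := by
  have hvu1 := h1.ne
  have hu1y1 := h2.ne
  have hy1y2 := h3.ne
  have hy2u2 := h4.ne
  have hu2v := h5.ne
  refine ⟨v, .cons h1 (.cons h2 (.cons h3 (.cons h4 (.cons h5 .nil)))), ?_, rfl⟩
  simp [SimpleGraph.Walk.isCycle_def, SimpleGraph.Walk.isTrail_def,
    List.nodup_cons, Sym2.eq_iff]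
  aesop

/-- in a `w`-well-covered graph with no `C₅`, for every vertex
`v ∉ L(G)` with `D(v) ≠ ∅` and every maximal independent set `M` of the
subgraph induced by `D(v)`, we have `w(v) = w(M)`. -/
theorem stmt_7 {V : Type*} [Fintype V] (G : SimpleGraph V)
    (h5 : ¬ HasCycleLen G 5) (w : V → ℝ) (hw : WWC G w)
    (v : V) (hv : v ∉ lSet G) (hD : (dSet G v).Nonempty)
    (M : Set V) (hM : IsMaxIndepOn G (dSet G v) M) :
    w v = wsum w M := by
  classical
  -- description of N2(v)
  have hn2 : ∀ y, y ∈ n2 G {v} ↔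
      ((y ≠ v ∧ ¬ G.Adj y v) ∧ ∃ z, G.Adj z v ∧ G.Adj y z) := by
    intro y
    simp only [n2, cnbhd, nbhd, Set.mem_setOf_eq, Set.mem_union,
      Set.mem_singleton_iff]
    constructor
    · rintro ⟨hy1, z, ⟨hz1, z', hz', hadz⟩, hyz⟩
      rw [hz'] at hadz
      push_neg at hy1
      exact ⟨⟨hy1.1, hy1.2 v rfl⟩, z, hadz, hyz⟩
    · rintro ⟨⟨hy1, hy2⟩, z, hzv, hyz⟩
      refine ⟨?_, z, ⟨fun h => G.irrefl (h ▸ hzv), v, rfl, hzv⟩, hyz⟩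
      push_neg
      exact ⟨hy1, fun x hx => by rw [hx]; exact hy2⟩
  -- membership in complement of closed neighborhood
  have hcn : ∀ x, x ∉ cnbhd G {v} ↔ (x ≠ v ∧ ¬ G.Adj x v) := by
    intro x
    simp only [cnbhd, Set.mem_union, Set.mem_singleton_iff, Set.mem_setOf_eq]
    push_neg
    constructor
    · rintro ⟨h1, h2⟩; exact ⟨h1, h2 v rfl⟩
    · rintro ⟨h1, h2⟩; exact ⟨h1, fun x hx => hx ▸ h2⟩
  -- key consequence of no C5
  have key : ∀ {ya yb ua ub : V}, ya ∈ n2 G {v} → yb ∈ n2 G {v} → G.Adj ya yb →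
      G.Adj v ua → G.Adj ya ua → G.Adj v ub → G.Adj yb ub → ua = ub := by
    intro ya yb ua ub hya hyb hab hvua hyua hvub hyub
    by_contra hne
    obtain ⟨⟨hya1, hya2⟩, -⟩ := (hn2 ya).1 hya
    obtain ⟨⟨hyb1, hyb2⟩, -⟩ := (hn2 yb).1 hyb
    have h1 : ua ≠ yb := fun h => hyb2 (h ▸ hvua.symm)
    have h2 : ya ≠ ub := fun h => hya2 (h ▸ hvub.symm)
    exact h5 (mk_c5 G hvua hyua.symm hab hyub hvub.symm
      hya1.symm hyb1.symm h1 hne h2)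
  -- members of M are in N(v), not adjacent to N2(v)
  have hMD : M ⊆ dSet G v := hM.1
  have hMnv : ∀ m ∈ M, G.Adj v m := fun m hm => (hMD hm).1
  have hMn2 : ∀ m ∈ M, ∀ y ∈ n2 G {v}, ¬ G.Adj m y := by
    intro m hm y hy hadj
    refine (hMD hm).2 ⟨?_, y, hy, hadj⟩
    rw [hn2]
    rintro ⟨⟨-, hmv⟩, -⟩
    exact hmv (hMnv m hm).symm
  -- choose, for each u ∈ N(v) \ D(v), a neighbor in N2(v)
  have hpick : ∀ u ∈ G.neighborSet v \ dSet G v, ∃ yy, yy ∈ n2 G {v} ∧ G.Adj u yy := by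
    intro u hu
    obtain ⟨hu1, hu2⟩ := hu
    have : u ∈ nbhd G (n2 G {v}) := by
      by_contra h; exact hu2 ⟨hu1, h⟩
    obtain ⟨-, s, hs, hus⟩ := this
    exact ⟨s, hs, hus⟩
  choose! yfun hyf1 hyf2 using hpick
  set Y : Set V := yfun '' (G.neighborSet v \ dSet G v) with hY
  have hYn2 : Y ⊆ n2 G {v} := by
    rintro y ⟨u, hu, rfl⟩; exact hyf1 u hu
  have hYindep : IsIndep G Y := by
    rintro a ⟨ua, hua, rfl⟩ b ⟨ub, hub, rfl⟩ hne hadj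
    have := key (hyf1 ua hua) (hyf1 ub hub) hadj hua.1 ((hyf2 ua hua).symm)
      hub.1 ((hyf2 ub hub).symm)
    exact hne (this ▸ rfl)
  -- S : maximal independent subset of complement of N[v] containing Y
  set C : Set (Set V) := {T | T ⊆ (cnbhd G {v})ᶜ ∧ IsIndep G T ∧ Y ⊆ T} with hC
  have hYC : Y ∈ C := by
    refine ⟨fun y hy => ?_, hYindep, subset_rfl⟩
    have := (hn2 _).1 (hYn2 hy)
    exact (hcn y).2 this.1
  obtain ⟨S, hSC, hSmax⟩ := Set.Finite.exists_maximalFor id C (Set.toFinite C) ⟨Y, hYC⟩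
  simp only [id] at hSmax
  obtain ⟨hScn, hSindep, hYS⟩ := hSC
  -- facts about S
  have hSext : ∀ x, x ∉ cnbhd G {v} → (∀ s ∈ S, ¬ G.Adj x s) → x ∈ S := by
    intro x hx hxs
    have hmem : S ∪ {x} ∈ C := by
      refine ⟨Set.union_subset hScn (by simpa using hx), ?_, hYS.trans Set.subset_union_left⟩
      intro a ha b hb hne hadj
      rcases ha with ha | ha
      · rcases hb with hb | hb
        · exact hSindep ha hb hne hadj
        · exact hxs a ha (hb ▸ hadj).symm
      · rcases hb with hb | hb
        · exact hxs b hb (ha ▸ hadj)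
        · exact hne (ha.trans hb.symm)
    have := hSmax hmem Set.subset_union_left
    exact this (Or.inr rfl)
  have hSnv : ∀ s ∈ S, ¬ G.Adj v s := by
    intro s hs hadj
    exact ((hcn s).1 (hScn hs)).2 hadj.symm
  have hvS : v ∉ S := by
    intro h
    exact ((hcn v).1 (hScn h)).1 rfl
  have hSM : ∀ s ∈ S, ∀ m ∈ M, ¬ G.Adj s m := by
    intro s hs m hm hadj
    have hsn2 : s ∈ n2 G {v} := by
      rw [hn2]
      obtain ⟨h1, h2⟩ := (hcn s).1 (hScn hs)
      exact ⟨⟨h1, h2⟩, m, (hMnv m hm).symm, hadj⟩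
    exact hMn2 m hm s hsn2 hadj.symm
  -- M is nonempty
  obtain ⟨d, hd⟩ := hD
  have hMne : M.Nonempty := by
    by_contra h
    rw [Set.not_nonempty_iff_eq_empty] at h
    have := hM.2.2 {d} (by simpa using hd) (Set.pairwise_singleton _ _)
      (h ▸ Set.empty_subset _)
    simp [h] at this
  -- S ∪ {v} is a maximal independent set
  have hmax1 : IsMaxIndep G (S ∪ {v}) := by
    constructor
    · intro a ha b hb hne hadj
      rcases ha with ha | ha
      · rcases hb with hb | hb
        · exact hSindep ha hb hne hadj
        · exact hSnv a ha (hb ▸ hadj).symm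
      · rcases hb with hb | hb
        · exact hSnv b hb (ha ▸ hadj)
        · exact hne (ha.trans hb.symm)
    · intro T hT hST
      apply Set.Subset.antisymm _ hST
      intro x hx
      by_cases hxv : x = v
      · exact Or.inr hxv
      have hxnadj : ¬ G.Adj x v :=
        hT hx (hST (Or.inr rfl)) hxv
      left
      refine hSext x ((hcn x).2 ⟨hxv, hxnadj⟩) ?_
      intro s hs hadj
      by_cases hxs : x = s
      · exact G.irrefl (hxs ▸ hadj)
      · exact hT hx (hST (Or.inl hs)) hxs hadj
  -- S ∪ M is a maximal independent set
  have hmax2 : IsMaxIndep G (S ∪ M) := by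
    constructor
    · intro a ha b hb hne hadj
      rcases ha with ha | ha
      · rcases hb with hb | hb
        · exact hSindep ha hb hne hadj
        · exact hSM a ha b hb hadj
      · rcases hb with hb | hb
        · exact hSM b hb a ha hadj.symm
        · exact hM.2.1 ha hb hne hadj
    · intro T hT hST
      apply Set.Subset.antisymm _ hST
      intro x hx
      by_cases hxv : x = v
      · exfalso
        obtain ⟨m, hm⟩ := hMne
        have hne : x ≠ m := fun h => G.irrefl ((hxv ▸ h ▸ hMnv m hm :))
        exact hT hx (hST (Or.inr hm)) hne (hxv ▸ hMnv m hm)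
      by_cases hxadj : G.Adj x v
      · -- x ∈ N(v)
        by_cases hxD : x ∈ dSet G v
        · right
          have hMx : M ∪ {x} ⊆ dSet G v := Set.union_subset hMD (by simpa using hxD)
          have hMxI : IsIndep G (M ∪ {x}) := by
            intro a ha b hb hne hadj
            rcases ha with ha | ha
            · rcases hb with hb | hb
              · exact hM.2.1 ha hb hne hadj
              · exact hT (hST (Or.inr ha)) (hb ▸ hx) hne hadj
            · rcases hb with hb | hb
              · exact hT (ha ▸ hx) (hST (Or.inr hb)) hne hadj
              · exact hne (ha.trans hb.symm)
          have := hM.2.2 _ hMx hMxI Set.subset_union_left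
          rw [← this]; exact Or.inr rfl
        · exfalso
          have hmem : x ∈ G.neighborSet v \ dSet G v := ⟨hxadj.symm, hxD⟩
          have h1 : G.Adj x (yfun x) := hyf2 x hmem
          have h2 : yfun x ∈ S := hYS ⟨x, hmem, rfl⟩
          exact hT hx (hST (Or.inl h2)) h1.ne h1
      · -- x outside N[v]
        left
        refine hSext x ((hcn x).2 ⟨hxv, hxadj⟩) ?_
        intro s hs hadj
        by_cases hxs : x = s
        · exact G.irrefl (hxs ▸ hadj)
        · exact hT hx (hST (Or.inl hs)) hxs hadj
  -- conclude via well-coveredness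
  have heq := hw _ _ hmax1 hmax2
  have hdisj1 : Disjoint S {v} := Set.disjoint_singleton_right.2 hvS
  have hdisj2 : Disjoint S M := by
    rw [Set.disjoint_left]
    intro s hs hsM
    exact ((hcn s).1 (hScn hs)).2 ((hMnv s hsM).symm)
  have e1 : wsum w (S ∪ {v}) = wsum w S + w v := by
    rw [wsum, finsum_mem_union hdisj1 (Set.toFinite _) (Set.toFinite _)]
    simp [wsum]
  have e2 : wsum w (S ∪ M) = wsum w S + wsum w M := by
    rw [wsum, finsum_mem_union hdisj2 (Set.toFinite _) (Set.toFinite _)]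
    rfl
  rw [e1, e2] at heq
  linarith
end

section
/- Let G = (V,E) be a finite simple graph containing no cycle of length 4, no cycle of length 5, and no cycle of length 6 (as subgraphs, not necessarily induced), and let w : V → ℝ be a weight function such that G is w-well-covered. Let v ∈ V \ L(G), and suppose there exists a vertex u ∈ N[v] such that D(u) ≠ ∅. Then for every maximal independent set M of the subgraph of G induced by D(v), w(v) = w(M) (in particular, if D(v) = ∅, then w(v) = 0). -/
namespace WC

open SimpleGraph

variable {V : Type*}

lemma no_c4 {G : SimpleGraph V} (h : ¬ HasCycleLen G 4) {a b c d : V}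
    (hab : G.Adj a b) (hbc : G.Adj b c) (hcd : G.Adj c d) (hda : G.Adj d a)
    (hac : a ≠ c) (hbd : b ≠ d) : False := by
  apply h
  refine ⟨a, Walk.cons hab (Walk.cons hbc (Walk.cons hcd (Walk.cons hda Walk.nil))), ?_, rfl⟩
  have h1 := hab.ne; have h2 := hbc.ne; have h3 := hcd.ne; have h4 := hda.ne
  constructor
  · constructor
    · simp [Walk.isTrail_def, Sym2.eq_iff]; aesop
    · simp
  · simp; aesop

lemma no_c5 {G : SimpleGraph V} (h : ¬ HasCycleLen G 5) {a b c d e : V}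
    (hab : G.Adj a b) (hbc : G.Adj b c) (hcd : G.Adj c d) (hde : G.Adj d e)
    (hea : G.Adj e a)
    (hac : a ≠ c) (had : a ≠ d) (hbd : b ≠ d) (hbe : b ≠ e) (hce : c ≠ e) : False := by
  apply h
  refine ⟨a, Walk.cons hab (Walk.cons hbc (Walk.cons hcd (Walk.cons hde (Walk.cons hea
    Walk.nil)))), ?_, rfl⟩
  have h1 := hab.ne; have h2 := hbc.ne; have h3 := hcd.ne; have h4 := hde.ne; have h5 := hea.ne
  constructor
  · constructor
    · simp [Walk.isTrail_def, Sym2.eq_iff]; aesop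
    · simp
  · simp; aesop

lemma no_c6 {G : SimpleGraph V} (h : ¬ HasCycleLen G 6) {a b c d e f : V}
    (hab : G.Adj a b) (hbc : G.Adj b c) (hcd : G.Adj c d) (hde : G.Adj d e)
    (hef : G.Adj e f) (hfa : G.Adj f a)
    (hac : a ≠ c) (had : a ≠ d) (hae : a ≠ e) (hbd : b ≠ d) (hbe : b ≠ e)
    (hbf : b ≠ f) (hce : c ≠ e) (hcf : c ≠ f) (hdf : d ≠ f) : False := by
  apply h
  refine ⟨a, Walk.cons hab (Walk.cons hbc (Walk.cons hcd (Walk.cons hde (Walk.cons hef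
    (Walk.cons hfa Walk.nil))))), ?_, rfl⟩
  have h1 := hab.ne; have h2 := hbc.ne; have h3 := hcd.ne; have h4 := hde.ne
  have h5 := hef.ne; have h6 := hfa.ne
  constructor
  · constructor
    · simp [Walk.isTrail_def, Sym2.eq_iff]; aesop
    · simp
  · simp; aesop

lemma mem_nbhd_s {G : SimpleGraph V} {v x : V} : x ∈ nbhd G {v} ↔ G.Adj x v := by
  simp only [nbhd, Set.mem_setOf_eq, Set.mem_singleton_iff, exists_eq_left]
  exact ⟨fun h => h.2, fun h => ⟨h.ne, h⟩⟩

lemma mem_cnbhd_s {G : SimpleGraph V} {v x : V} : x ∈ cnbhd G {v} ↔ x = v ∨ G.Adj x v := by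
  simp [cnbhd]

lemma mem_n2_s {G : SimpleGraph V} {v x : V} :
    x ∈ n2 G {v} ↔ (x ≠ v ∧ ¬ G.Adj x v ∧ ∃ y, G.Adj y v ∧ G.Adj x y) := by
  simp only [n2, Set.mem_setOf_eq, mem_cnbhd_s, not_or]
  constructor
  · rintro ⟨⟨h1, h2⟩, y, hy, hxy⟩
    exact ⟨h1, h2, y, mem_nbhd_s.mp hy, hxy⟩
  · rintro ⟨h1, h2, y, hyv, hxy⟩
    exact ⟨⟨h1, h2⟩, y, mem_nbhd_s.mpr hyv, hxy⟩

lemma mem_dSet {G : SimpleGraph V} {v m : V} :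
    m ∈ dSet G v ↔ G.Adj v m ∧ ∀ z ∈ n2 G {v}, ¬ G.Adj m z := by
  simp only [dSet, Set.mem_diff, SimpleGraph.mem_neighborSet, nbhd, Set.mem_setOf_eq, not_and,
    not_exists]
  constructor
  · rintro ⟨h1, h2⟩
    refine ⟨h1, fun z hz hadj => ?_⟩
    have hm : m ∉ n2 G {v} := by
      rw [mem_n2_s]; push_neg; intro _ _; exact absurd h1.symm (by tauto)
    exact (h2 hm) z hz hadj
  · rintro ⟨h1, h2⟩
    exact ⟨h1, fun _ => h2⟩

lemma indep_insert {G : SimpleGraph V} {S : Set V} {a : V} (hS : IsIndep G S)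
    (h : ∀ s ∈ S, ¬ G.Adj a s) : IsIndep G (insert a S) := by
  have hsymm : Std.Symm (fun a b => ¬ G.Adj a b) := ⟨fun x y hxy hadj => hxy (hadj.symm)⟩
  exact Set.pairwise_insert_of_symm.mpr ⟨hS, fun b hb _ => h b hb⟩

lemma indep_union {G : SimpleGraph V} {S T : Set V} (hS : IsIndep G S) (hT : IsIndep G T)
    (h : ∀ s ∈ S, ∀ t ∈ T, ¬ G.Adj s t) : IsIndep G (S ∪ T) := by
  have hsymm : Std.Symm (fun a b => ¬ G.Adj a b) := ⟨fun x y hxy hadj => hxy (hadj.symm)⟩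
  exact Set.pairwise_union_of_symm.mpr ⟨hS, hT, fun a ha b hb _ => h a ha b hb⟩

lemma exists_maxIndepOn (G : SimpleGraph V) [Finite V] {A T : Set V}
    (hTA : T ⊆ A) (hT : IsIndep G T) : ∃ S, T ⊆ S ∧ IsMaxIndepOn G A S := by
  classical
  set F : Set (Set V) := {S | T ⊆ S ∧ S ⊆ A ∧ IsIndep G S} with hF
  have hfin : F.Finite := Set.toFinite F
  obtain ⟨S, hSF, hmax⟩ := Set.Finite.exists_maximalFor Set.ncard F hfin ⟨T, le_refl T, hTA, hT⟩
  refine ⟨S, hSF.1, hSF.2.1, hSF.2.2, fun T' hT'A hT'i hsub => ?_⟩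
  have hT'F : T' ∈ F := ⟨hSF.1.trans hsub, hT'A, hT'i⟩
  have hle : S.ncard ≤ T'.ncard := Set.ncard_le_ncard hsub (Set.toFinite T')
  have heq := le_antisymm hle (hmax hT'F hle)
  exact (Set.eq_of_subset_of_ncard_le hsub heq.ge (Set.toFinite T')).symm

lemma maxIndepOn_dom {G : SimpleGraph V} {A S : Set V} (hS : IsMaxIndepOn G A S)
    {a : V} (ha : a ∈ A) (haS : a ∉ S) : ∃ s ∈ S, G.Adj a s := by
  by_contra hc
  push_neg at hc
  have hins : IsIndep G (insert a S) := indep_insert hS.2.1 hc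
  have := hS.2.2 (insert a S) (Set.insert_subset ha hS.1) hins (Set.subset_insert a S)
  exact haS (this ▸ Set.mem_insert a S)

lemma isMaxIndep_union {G : SimpleGraph V} {R S C : Set V}
    (hS : IsMaxIndepOn G R S) (hind : IsIndep G (S ∪ C))
    (hdom : ∀ x, x ∉ R → x ∉ C → ∃ s ∈ S ∪ C, G.Adj x s) :
    IsMaxIndep G (S ∪ C) := by
  refine ⟨hind, fun T hT hsub => ?_⟩
  ext t
  refine ⟨fun ht => ?_, fun h => hsub h⟩
  by_contra htSC
  have htS : t ∉ S := fun h => htSC (Or.inl h)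
  have htC : t ∉ C := fun h => htSC (Or.inr h)
  by_cases htR : t ∈ R
  · have hins : IsIndep G (insert t S) := by
      refine indep_insert hS.2.1 fun s hs hadj => ?_
      exact hT ht (hsub (Or.inl hs)) hadj.ne hadj
    have := hS.2.2 (insert t S) (Set.insert_subset htR hS.1) hins (Set.subset_insert t S)
    exact htS (this ▸ Set.mem_insert t S)
  · obtain ⟨s, hs, hadj⟩ := hdom t htR htC
    exact hT ht (hsub hs) hadj.ne hadj

lemma wsum_union [Finite V] (w : V → ℝ) {S T : Set V} (h : Disjoint S T) :
    wsum w (S ∪ T) = wsum w S + wsum w T :=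
  finsum_mem_union h (Set.toFinite S) (Set.toFinite T)

lemma case1 [Finite V] {G : SimpleGraph V} (h5 : ¬ HasCycleLen G 5)
    {w : V → ℝ} (hw : WWC G w) (v : V) {M : Set V}
    (hM : IsMaxIndepOn G (dSet G v) M) (hMne : M.Nonempty) : w v = wsum w M := by
  classical
  set R : Set V := (cnbhd G {v})ᶜ with hRdef
  have hch : ∀ x : V, G.Adj v x → x ∉ dSet G v → ∃ y, y ∈ n2 G {v} ∧ G.Adj x y := by
    intro x hvx hxD
    rw [mem_dSet] at hxD
    push_neg at hxD
    obtain ⟨z, hz, hadj⟩ := hxD hvx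
    exact ⟨z, hz, hadj⟩
  choose! f hf1 hf2 using hch
  set Y : Set V := {y | ∃ x, G.Adj v x ∧ x ∉ dSet G v ∧ f x = y} with hYdef
  have hYindep : IsIndep G Y := by
    rintro y1 ⟨x1, hvx1, hx1D, rfl⟩ y2 ⟨x2, hvx2, hx2D, rfl⟩ hne hadj
    have hy1 := mem_n2_s.mp (hf1 x1 hvx1 hx1D)
    have hy2 := mem_n2_s.mp (hf1 x2 hvx2 hx2D)
    have hx12 : x1 ≠ x2 := by rintro rfl; exact hne rfl
    exact no_c5 h5 hvx1 (hf2 x1 hvx1 hx1D) hadj (hf2 x2 hvx2 hx2D).symm hvx2.symm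
      (fun h => hy1.1 h.symm) (fun h => hy2.1 h.symm)
      (fun h => hy2.2.1 (h ▸ hvx1.symm))
      hx12 (fun h => hy1.2.1 (h.symm ▸ hvx2.symm))
  have hYR : Y ⊆ R := by
    rintro y ⟨x, hvx, hxD, rfl⟩
    have hy := mem_n2_s.mp (hf1 x hvx hxD)
    simp only [hRdef, Set.mem_compl_iff, mem_cnbhd_s]
    push_neg
    exact ⟨hy.1, hy.2.1⟩
  obtain ⟨S, hYS, hS⟩ := exists_maxIndepOn G hYR hYindep
  have hSR : S ⊆ R := hS.1
  have hvR : v ∉ R := by simp [hRdef, mem_cnbhd_s]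
  have hMnotR : ∀ m ∈ M, m ∉ R := fun m hm hmR => by
    have hd := (mem_dSet.mp (hM.1 hm)).1
    simp only [hRdef, Set.mem_compl_iff, mem_cnbhd_s, not_or] at hmR
    exact hmR.2 hd.symm
  have hSnotv : ∀ s ∈ S, ¬ G.Adj s v ∧ s ≠ v := fun s hs => by
    have hsR := hSR hs
    simp only [hRdef, Set.mem_compl_iff, mem_cnbhd_s, not_or] at hsR
    exact ⟨hsR.2, hsR.1⟩
  have mis1 : IsMaxIndep G (S ∪ {v}) := by
    apply isMaxIndep_union hS
    · exact indep_union hS.2.1 (Set.pairwise_singleton v _) (fun s hs t ht => by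
        rw [Set.mem_singleton_iff] at ht; subst ht; exact (hSnotv s hs).1)
    · intro x hxR hxv
      rw [hRdef, Set.mem_compl_iff, not_not, mem_cnbhd_s] at hxR
      rcases hxR with rfl | hadj
      · exact absurd rfl hxv
      · exact ⟨v, Or.inr rfl, hadj⟩
  have hSM : ∀ s ∈ S, ∀ m ∈ M, ¬ G.Adj s m := by
    intro s hs m hm hadj
    have hmD := mem_dSet.mp (hM.1 hm)
    have hsprop := hSnotv s hs
    have hsn2 : s ∈ n2 G {v} := mem_n2_s.mpr ⟨hsprop.2, hsprop.1, m, hmD.1.symm, hadj⟩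
    exact hmD.2 s hsn2 hadj.symm
  have mis2 : IsMaxIndep G (S ∪ M) := by
    apply isMaxIndep_union hS
    · exact indep_union hS.2.1 hM.2.1 hSM
    · intro x hxR hxM
      rw [hRdef, Set.mem_compl_iff, not_not, mem_cnbhd_s] at hxR
      rcases hxR with rfl | hadj
      · obtain ⟨m, hm⟩ := hMne
        exact ⟨m, Or.inr hm, (mem_dSet.mp (hM.1 hm)).1⟩
      · by_cases hxD : x ∈ dSet G v
        · obtain ⟨m, hm, hadjm⟩ := maxIndepOn_dom hM hxD hxM
          exact ⟨m, Or.inr hm, hadjm⟩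
        · exact ⟨f x, Or.inl (hYS ⟨x, hadj.symm, hxD, rfl⟩), hf2 x hadj.symm hxD⟩
  have hkey := hw _ _ mis1 mis2
  have hd1 : Disjoint S {v} := Set.disjoint_singleton_right.mpr (fun h => hvR (hSR h))
  have hd2 : Disjoint S M := Set.disjoint_left.mpr (fun {a} ha hb => hMnotR a hb (hSR ha))
  rw [wsum_union w hd1, wsum_union w hd2] at hkey
  have hsing : wsum w {v} = w v := finsum_mem_singleton
  rw [hsing] at hkey
  linarith

lemma case2 [Finite V] {G : SimpleGraph V}
    (h4 : ¬ HasCycleLen G 4) (h5 : ¬ HasCycleLen G 5) (h6 : ¬ HasCycleLen G 6)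
    {w : V → ℝ} (hw : WWC G w) {v : V} (hv : v ∉ lSet G)
    (hDv : dSet G v = ∅) {u : V} (hvu : G.Adj v u)
    (hDu : (dSet G u).Nonempty) : w v = 0 := by
  classical
  set R : Set V := (cnbhd G {v} ∪ cnbhd G {u})ᶜ with hRdef
  have hmemR : ∀ y, y ∈ R ↔ (y ≠ v ∧ ¬ G.Adj y v ∧ y ≠ u ∧ ¬ G.Adj y u) := by
    intro y
    simp only [hRdef, Set.mem_compl_iff, Set.mem_union, mem_cnbhd_s, not_or]
    tauto
  -- v is not in D(u)
  have hvnotDu : v ∉ dSet G u := by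
    intro hvDu
    rw [mem_dSet] at hvDu
    have hnb : ∀ x, G.Adj v x → x = u ∨ G.Adj x u := by
      intro x hvx
      by_contra hc; push_neg at hc
      have hxn2 : x ∈ n2 G {u} := mem_n2_s.mpr ⟨hc.1, hc.2, v, hvu, hvx.symm⟩
      exact hvDu.2 x hxn2 hvx
    apply hv
    simp only [lSet, Set.mem_setOf_eq]
    by_cases hex : ∃ x, G.Adj v x ∧ x ≠ u
    · obtain ⟨x0, hx0, hx0u⟩ := hex
      have hx0adj : G.Adj x0 u := (hnb x0 hx0).resolve_left hx0u
      have hset : G.neighborSet v = {u, x0} := by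
        ext x
        simp only [mem_neighborSet, Set.mem_insert_iff, Set.mem_singleton_iff]
        constructor
        · intro hx
          rcases hnb x hx with h | h
          · exact Or.inl h
          · by_contra hcc; push_neg at hcc
            exact no_c4 h4 hx h hx0adj.symm hx0.symm hvu.ne hcc.2
        · rintro (rfl | rfl)
          exacts [hvu, hx0]
      right
      rw [hset, Set.ncard_pair (Ne.symm hx0u)]
      exact ⟨rfl, u, x0, hvu, hx0, hx0adj.symm⟩
    · push_neg at hex
      have hset : G.neighborSet v = {u} := by
        ext x
        simp only [mem_neighborSet, Set.mem_singleton_iff]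
        exact ⟨fun hx => hex x hx, fun h => h ▸ hvu⟩
      left
      rw [hset, Set.ncard_singleton]
  -- D(u) avoids N[v]
  have hDuNv : ∀ m ∈ dSet G u, m ≠ v ∧ ¬ G.Adj m v := by
    intro m hm
    have hmD := mem_dSet.mp hm
    constructor
    · rintro rfl; exact hvnotDu hm
    · intro hmv
      have hmnotDv : m ∉ dSet G v := by rw [hDv]; exact Set.notMem_empty m
      rw [mem_dSet] at hmnotDv; push_neg at hmnotDv
      obtain ⟨z, hz, hmz⟩ := hmnotDv hmv.symm
      have hzp := mem_n2_s.mp hz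
      have hzu : z ≠ u := fun h => hzp.2.1 (h ▸ hvu.symm)
      have hzadju : ¬ G.Adj z u := by
        intro hzadj
        exact no_c4 h4 hvu hzadj.symm hmz.symm hmv (fun h => hzp.1 h.symm) hmD.1.ne
      have hzn2u : z ∈ n2 G {u} := mem_n2_s.mpr ⟨hzu, hzadju, m, hmD.1.symm, hmz.symm⟩
      exact (hmD.2 z hzn2u) hmz
  -- maximal independent set of D(u)
  obtain ⟨M, -, hM⟩ := exists_maxIndepOn G (Set.empty_subset (dSet G u))
    (Set.pairwise_empty _)
  have hMne : M.Nonempty := by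
    rcases Set.eq_empty_or_nonempty M with rfl | h
    · obtain ⟨d, hd⟩ := hDu
      have := hM.2.2 {d} (Set.singleton_subset_iff.mpr hd) (Set.pairwise_singleton _ _)
        (Set.empty_subset _)
      exact absurd this (Set.singleton_ne_empty d)
    · exact h
  have hwu : w u = wsum w M := case1 h5 hw u hM hMne
  -- choice functions
  have hch1 : ∀ x, G.Adj v x → x ∉ cnbhd G {u} →
      ∃ y, y ∈ n2 G {v} ∧ G.Adj x y ∧ y ∈ R := by
    intro x hvx hxu
    have hxD : x ∉ dSet G v := by rw [hDv]; exact Set.notMem_empty x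
    rw [mem_dSet] at hxD; push_neg at hxD
    obtain ⟨y, hy, hxy⟩ := hxD hvx
    have hyp := mem_n2_s.mp hy
    rw [mem_cnbhd_s] at hxu; push_neg at hxu
    have hyu : y ≠ u := fun h => hyp.2.1 (h ▸ hvu.symm)
    have hyadju : ¬ G.Adj y u := by
      intro hadj
      exact no_c4 h4 hvx hxy hadj hvu.symm (fun h => hyp.1 h.symm) hxu.1
    refine ⟨y, hy, hxy, (hmemR y).mpr ⟨hyp.1, hyp.2.1, hyu, hyadju⟩⟩
  choose! g hg1 hg2 hg3 using hch1
  have hch2 : ∀ x, G.Adj u x → x ∉ cnbhd G {v} → x ∉ dSet G u →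
      ∃ y, y ∈ n2 G {u} ∧ G.Adj x y ∧ y ∈ R := by
    intro x hux hxv hxD
    rw [mem_dSet] at hxD; push_neg at hxD
    obtain ⟨y, hy, hxy⟩ := hxD hux
    have hyp := mem_n2_s.mp hy
    rw [mem_cnbhd_s] at hxv; push_neg at hxv
    have hyv : y ≠ v := fun h => hyp.2.1 (h ▸ hvu)
    have hyadjv : ¬ G.Adj y v := by
      intro hadj
      exact no_c4 h4 hux hxy hadj hvu (fun h => hyp.1 h.symm) hxv.1
    refine ⟨y, hy, hxy, (hmemR y).mpr ⟨hyv, hyadjv, hyp.1, hyp.2.1⟩⟩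
  choose! k hk1 hk2 hk3 using hch2
  set Y1 : Set V := {y | ∃ x, G.Adj v x ∧ x ∉ cnbhd G {u} ∧ g x = y} with hY1def
  set Y2 : Set V := {y | ∃ x, G.Adj u x ∧ x ∉ cnbhd G {v} ∧ x ∉ dSet G u ∧ k x = y}
    with hY2def
  have mixed : ∀ x1, G.Adj v x1 → x1 ∉ cnbhd G {u} →
      ∀ x2, G.Adj u x2 → x2 ∉ cnbhd G {v} → x2 ∉ dSet G u →
      ¬ G.Adj (g x1) (k x2) := by
    intro x1 hvx1 hx1u x2 hux2 hx2v hx2D hadj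
    have hR1 := (hmemR _).mp (hg3 x1 hvx1 hx1u)
    have hR2 := (hmemR _).mp (hk3 x2 hux2 hx2v hx2D)
    have hgadj := hg2 x1 hvx1 hx1u
    have hkadj := hk2 x2 hux2 hx2v hx2D
    rw [mem_cnbhd_s] at hx1u hx2v
    push_neg at hx1u hx2v
    exact no_c6 h6 hvx1 hgadj hadj hkadj.symm hux2.symm hvu.symm
      (fun h => hR1.1 h.symm) (fun h => hR2.1 h.symm) (fun h => hx2v.1 h.symm)
      (fun h => hR2.2.1 (by rw [← h]; exact hvx1.symm))
      (fun h => hx1u.2 (by rw [h]; exact hux2.symm))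
      hx1u.1
      (fun h => hR1.2.2.2 (by rw [h]; exact hux2.symm))
      hR1.2.2.1 hR2.2.2.1
  have same1 : ∀ x1, G.Adj v x1 → x1 ∉ cnbhd G {u} →
      ∀ x2, G.Adj v x2 → x2 ∉ cnbhd G {u} → g x1 ≠ g x2 → ¬ G.Adj (g x1) (g x2) := by
    intro x1 hvx1 hx1u x2 hvx2 hx2u hne hadj
    have hR1 := (hmemR _).mp (hg3 x1 hvx1 hx1u)
    have hR2 := (hmemR _).mp (hg3 x2 hvx2 hx2u)
    have hx12 : x1 ≠ x2 := by rintro rfl; exact hne rfl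
    exact no_c5 h5 hvx1 (hg2 x1 hvx1 hx1u) hadj (hg2 x2 hvx2 hx2u).symm hvx2.symm
      (fun h => hR1.1 h.symm) (fun h => hR2.1 h.symm)
      (fun h => hR2.2.1 (by rw [← h]; exact hvx1.symm))
      hx12
      (fun h => hR1.2.1 (by rw [h]; exact hvx2.symm))
  have same2 : ∀ x1, G.Adj u x1 → x1 ∉ cnbhd G {v} → x1 ∉ dSet G u →
      ∀ x2, G.Adj u x2 → x2 ∉ cnbhd G {v} → x2 ∉ dSet G u →
      k x1 ≠ k x2 → ¬ G.Adj (k x1) (k x2) := by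
    intro x1 hux1 hx1v hx1D x2 hux2 hx2v hx2D hne hadj
    have hR1 := (hmemR _).mp (hk3 x1 hux1 hx1v hx1D)
    have hR2 := (hmemR _).mp (hk3 x2 hux2 hx2v hx2D)
    have hx12 : x1 ≠ x2 := by rintro rfl; exact hne rfl
    exact no_c5 h5 hux1 (hk2 x1 hux1 hx1v hx1D) hadj (hk2 x2 hux2 hx2v hx2D).symm hux2.symm
      (fun h => hR1.2.2.1 h.symm) (fun h => hR2.2.2.1 h.symm)
      (fun h => hR2.2.2.2 (by rw [← h]; exact hux1.symm))
      hx12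
      (fun h => hR1.2.2.2 (by rw [h]; exact hux2.symm))
  have hYindep : IsIndep G (Y1 ∪ Y2) := by
    rintro y1 (⟨x1, hvx1, hx1u, rfl⟩ | ⟨x1, hux1, hx1v, hx1D, rfl⟩)
      y2 (⟨x2, hvx2, hx2u, rfl⟩ | ⟨x2, hux2, hx2v, hx2D, rfl⟩) hne hadj
    · exact same1 x1 hvx1 hx1u x2 hvx2 hx2u hne hadj
    · exact mixed x1 hvx1 hx1u x2 hux2 hx2v hx2D hadj
    · exact mixed x2 hvx2 hx2u x1 hux1 hx1v hx1D hadj.symm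
    · exact same2 x1 hux1 hx1v hx1D x2 hux2 hx2v hx2D hne hadj
  have hYR : Y1 ∪ Y2 ⊆ R := by
    rintro y (⟨x, hvx, hxu, rfl⟩ | ⟨x, hux, hxv, hxD, rfl⟩)
    · exact hg3 x hvx hxu
    · exact hk3 x hux hxv hxD
  obtain ⟨S, hYS, hS⟩ := exists_maxIndepOn G hYR hYindep
  have hRs : ∀ s ∈ S, s ≠ v ∧ ¬ G.Adj s v ∧ s ≠ u ∧ ¬ G.Adj s u :=
    fun s hs => (hmemR s).mp (hS.1 hs)
  have misA : IsMaxIndep G (S ∪ {u}) := by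
    apply isMaxIndep_union hS
    · exact indep_union hS.2.1 (Set.pairwise_singleton u _) (fun s hs t ht => by
        rw [Set.mem_singleton_iff] at ht; subst ht; exact (hRs s hs).2.2.2)
    · intro x hxR hxu
      have hxune : x ≠ u := fun h => hxu (h ▸ rfl)
      have hx : x ∈ cnbhd G {v} ∪ cnbhd G {u} := by
        rwa [hRdef, Set.mem_compl_iff, not_not] at hxR
      rcases hx with hx | hx
      · rcases mem_cnbhd_s.mp hx with rfl | hadj
        · exact ⟨u, Or.inr rfl, hvu⟩
        · by_cases hxcu : x ∈ cnbhd G {u}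
          · rcases mem_cnbhd_s.mp hxcu with rfl | hadj2
            · exact absurd rfl hxune
            · exact ⟨u, Or.inr rfl, hadj2⟩
          · exact ⟨g x, Or.inl (hYS (Or.inl ⟨x, hadj.symm, hxcu, rfl⟩)),
              hg2 x hadj.symm hxcu⟩
      · rcases mem_cnbhd_s.mp hx with rfl | hadj
        · exact absurd rfl hxune
        · exact ⟨u, Or.inr rfl, hadj⟩
  have hSM : ∀ s ∈ S, ∀ m ∈ M, ¬ G.Adj s m := by
    intro s hs m hm hadj
    have hmD := mem_dSet.mp (hM.1 hm)
    have hsf := hRs s hs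
    have hsn2 : s ∈ n2 G {u} := mem_n2_s.mpr ⟨hsf.2.2.1, hsf.2.2.2, m, hmD.1.symm, hadj⟩
    exact hmD.2 s hsn2 hadj.symm
  have misB : IsMaxIndep G (S ∪ insert v M) := by
    apply isMaxIndep_union hS
    · refine indep_union hS.2.1 ?_ ?_
      · refine indep_insert hM.2.1 fun m hm hadj => ?_
        exact (hDuNv m (hM.1 hm)).2 hadj.symm
      · intro s hs t ht
        rcases ht with rfl | hm
        · exact (hRs s hs).2.1
        · exact hSM s hs t hm
    · intro x hxR hxC
      have hxv : x ≠ v := fun h => hxC (h ▸ Set.mem_insert v M)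
      have hx : x ∈ cnbhd G {v} ∪ cnbhd G {u} := by
        rwa [hRdef, Set.mem_compl_iff, not_not] at hxR
      rcases hx with hx | hx
      · rcases mem_cnbhd_s.mp hx with rfl | hadj
        · exact absurd rfl hxv
        · exact ⟨v, Or.inr (Set.mem_insert v M), hadj⟩
      · rcases mem_cnbhd_s.mp hx with rfl | hadj
        · exact ⟨v, Or.inr (Set.mem_insert v M), hvu.symm⟩
        · by_cases hxcv : x ∈ cnbhd G {v}
          · rcases mem_cnbhd_s.mp hxcv with rfl | hadj2
            · exact absurd rfl hxv
            · exact ⟨v, Or.inr (Set.mem_insert v M), hadj2⟩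
          · by_cases hxD : x ∈ dSet G u
            · have hxM : x ∉ M := fun h => hxC (Set.mem_insert_of_mem v h)
              obtain ⟨m, hm, hadjm⟩ := maxIndepOn_dom hM hxD hxM
              exact ⟨m, Or.inr (Set.mem_insert_of_mem v hm), hadjm⟩
            · exact ⟨k x, Or.inl (hYS (Or.inr ⟨x, hadj.symm, hxcv, hxD, rfl⟩)),
                hk2 x hadj.symm hxcv hxD⟩
  have hkey := hw _ _ misA misB
  have hd1 : Disjoint S {u} :=
    Set.disjoint_singleton_right.mpr (fun h => (hRs u h).2.2.1 rfl)
  have hvnotS : v ∉ S := fun h => (hRs v h).1 rfl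
  have hMnotS : ∀ m ∈ M, m ∉ S := fun m hm h =>
    (hRs m h).2.2.2 (mem_dSet.mp (hM.1 hm)).1.symm
  have hd2 : Disjoint S (insert v M) := by
    rw [Set.disjoint_right]
    intro a ha haS
    rcases ha with rfl | hm
    · exact hvnotS haS
    · exact hMnotS a hm haS
  rw [wsum_union w hd1, wsum_union w hd2] at hkey
  have hvM : v ∉ M := fun h => (hDuNv v (hM.1 h)).1 rfl
  have hins : wsum w (insert v M) = w v + wsum w M := by
    rw [← Set.singleton_union, wsum_union w (Set.disjoint_singleton_left.mpr hvM)]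
    have : wsum w {v} = w v := finsum_mem_singleton
    rw [this]
  have hsingu : wsum w {u} = w u := finsum_mem_singleton
  rw [hins, hsingu] at hkey
  linarith

end WC


open WC

/-- in a `w`-well-covered graph with no `C₄`, `C₅`, `C₆`, if
`v ∉ L(G)` and some `u ∈ N[v]` has `D(u) ≠ ∅`, then `w(v) = w(M)` for every
maximal independent set `M` of the subgraph induced by `D(v)`; in particular,
if `D(v) = ∅` then `w(v) = 0`. -/
theorem stmt_11 {V : Type*} [Fintype V] (G : SimpleGraph V)
    (h4 : ¬ HasCycleLen G 4) (h5 : ¬ HasCycleLen G 5) (h6 : ¬ HasCycleLen G 6)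
    (w : V → ℝ) (hw : WWC G w)
    (v : V) (hv : v ∉ lSet G)
    (hu : ∃ u ∈ cnbhd G {v}, (dSet G u).Nonempty) :
    (∀ M : Set V, IsMaxIndepOn G (dSet G v) M → w v = wsum w M) ∧
    (dSet G v = ∅ → w v = 0) := by
  classical
  have hmain : ∀ M : Set V, IsMaxIndepOn G (dSet G v) M → w v = wsum w M := by
    intro M hM
    rcases Set.eq_empty_or_nonempty (dSet G v) with hDv | hDvne
    · have hMempty : M = ∅ := Set.subset_empty_iff.mp (hDv ▸ hM.1)
      obtain ⟨u, hu_mem, hDu⟩ := hu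
      rcases mem_cnbhd_s.mp hu_mem with rfl | hadj
      · rw [hDv] at hDu
        exact absurd hDu (by simp)
      · have h0 := case2 h4 h5 h6 hw hv hDv hadj.symm hDu
        have hemp : wsum w (∅ : Set V) = 0 := finsum_mem_empty
        rw [hMempty, hemp]
        exact h0
    · have hMne : M.Nonempty := by
        rcases Set.eq_empty_or_nonempty M with rfl | h
        · obtain ⟨d, hd⟩ := hDvne
          have := hM.2.2 {d} (Set.singleton_subset_iff.mpr hd)
            (Set.pairwise_singleton _ _) (Set.empty_subset _)
          exact absurd this (Set.singleton_ne_empty d)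
        · exact h
      exact case1 h5 hw v hM hMne
  refine ⟨hmain, fun hDv => ?_⟩
  obtain ⟨u, hu_mem, hDu⟩ := hu
  rcases mem_cnbhd_s.mp hu_mem with rfl | hadj
  · rw [hDv] at hDu
    exact absurd hDu (by simp)
  · exact case2 h4 h5 h6 hw hv hDv hadj.symm hDu
end
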